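/- Let 𝔤 = 𝔤_{4.1} be the 4-dimensional real Lie algebra with basis e₁,...,e₄ and nonzero brackets [e₂,e₄] = e₁ and [e₃,e₄] = e₂. A 4×4 real matrix R equals η·Id + D for some η ∈ ℝ and some derivation D of 𝔤 if and only if R₂₁ = R₃₁ = R₄₁ = 0, R₃₂ = R₄₂ = R₄₃ = 0, R₂₃ = R₁₂, and R₂₂ + R₄₄ − R₁₁ = R₃₃ + R₄₄ − R₂₂. In this case η = R₂₂ + R₄₄ − R₁₁. -/
import Mathlib

open Matrix

/-- The Lie bracket of the Lie algebra, in coordinates. -/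
def br (x y : Fin 4 → ℝ) : Fin 4 → ℝ :=
  ![(x 1 * y 3 - x 3 * y 1), (x 2 * y 3 - x 3 * y 2), (0:ℝ), (0:ℝ)]

/-- `D` (acting via `mulVec`) is a derivation of the bracket. -/
def IsDer (D : Matrix (Fin 4) (Fin 4) ℝ) : Prop :=
  ∀ x y : Fin 4 → ℝ, D.mulVec (br x y) = br (D.mulVec x) y + br x (D.mulVec y)

lemma isDer_iff (D : Matrix (Fin 4) (Fin 4) ℝ) : IsDer D ↔
    (D 1 0 = 0 ∧ D 2 0 = 0 ∧ D 3 0 = 0 ∧ D 2 1 = 0 ∧ D 3 1 = 0 ∧ D 3 2 = 0 ∧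
     D 0 1 = D 1 2 ∧ D 0 0 = D 1 1 + D 3 3 ∧ D 1 1 = D 2 2 + D 3 3) := by
  constructor
  · intro hD
    have h03 := hD ![1,0,0,0] ![0,0,0,1]
    have h01 := hD ![1,0,0,0] ![0,1,0,0]
    have h12 := hD ![0,1,0,0] ![0,0,1,0]
    have h13 := hD ![0,1,0,0] ![0,0,0,1]
    have h23 := hD ![0,0,1,0] ![0,0,0,1]
    have e1 := congrFun h13 0
    have e2 := congrFun h13 1
    have e3 := congrFun h13 2
    have e4 := congrFun h13 3
    have f1 := congrFun h23 0
    have f2 := congrFun h23 1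
    have f3 := congrFun h23 2
    have f4 := congrFun h23 3
    have g1 := congrFun h01 0
    have g2 := congrFun h12 0
    have g3 := congrFun h12 1
    have k1 := congrFun h03 1
    have k2 := congrFun h03 2
    simp [mulVec, br, dotProduct, Fin.sum_univ_four] at e1 e2 e3 e4 f1 f2 f3 f4 g1 g2 g3 k1 k2
    refine ⟨?_, ?_, ?_, ?_, ?_, ?_, ?_, ?_, ?_⟩ <;> linarith
  · rintro ⟨h1, h2, h3, h4, h5, h6, h7, h8, h9⟩ x y
    funext i
    fin_cases i <;>
      simp [mulVec, br, dotProduct, Fin.sum_univ_four, h1, h2, h3, h4, h5, h6, h7, h8, h9] <;>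
      
      ring

theorem stmt_11 (R : Matrix (Fin 4) (Fin 4) ℝ) :
    ((∃ (η : ℝ) (D : Matrix (Fin 4) (Fin 4) ℝ), IsDer D ∧
        R = η • (1 : Matrix (Fin 4) (Fin 4) ℝ) + D) ↔
      (R 1 0 = 0 ∧ R 2 0 = 0 ∧ R 3 0 = 0 ∧ R 2 1 = 0 ∧ R 3 1 = 0 ∧ R 3 2 = 0 ∧ R 1 2 = R 0 1 ∧ R 1 1 + R 3 3 - R 0 0 = R 2 2 + R 3 3 - R 1 1)) ∧
    (∀ (η : ℝ) (D : Matrix (Fin 4) (Fin 4) ℝ), IsDer D →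
      R = η • (1 : Matrix (Fin 4) (Fin 4) ℝ) + D → η = R 1 1 + R 3 3 - R 0 0) := by
  constructor
  · constructor
    · rintro ⟨η, D, hD, rfl⟩
      rw [isDer_iff] at hD
      obtain ⟨h1, h2, h3, h4, h5, h6, h7, h8, h9⟩ := hD
      simp [Matrix.add_apply, Matrix.smul_apply, Matrix.one_apply]
      refine ⟨h1, h2, h3, h4, h5, h6, ?_, ?_⟩ <;> linarith
    · rintro ⟨h1, h2, h3, h4, h5, h6, h7, h8⟩
      refine ⟨R 1 1 + R 3 3 - R 0 0, R - (R 1 1 + R 3 3 - R 0 0) • 1, ?_, by abel⟩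
      rw [isDer_iff]
      simp [Matrix.sub_apply, Matrix.smul_apply, Matrix.one_apply]
      refine ⟨h1, h2, h3, h4, h5, h6, ?_, ?_, ?_⟩ <;> linarith
  · rintro η D hD rfl
    rw [isDer_iff] at hD
    obtain ⟨h1, h2, h3, h4, h5, h6, h7, h8, h9⟩ := hD
    simp [Matrix.add_apply, Matrix.smul_apply, Matrix.one_apply]
    linarith
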